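/- Let G be a finite group, p a prime, N = N_1 × ⋯ × N_t a normal subgroup of G that is an internal direct product, and g a p-element of G normalizing each N_i. Then |𝔘_p(Ng)| = Π_{i=1}^t |𝔘_p(N_i g)|, where 𝔘_p(Xg) denotes the set of p-elements in the coset Xg. In particular |𝔘_p(N)| = Π_{i=1}^t |𝔘_p(N_i)|. -/

import Mathlib

/-- `x` is a `p`-element: its order is a power of `p`. -/
def IsPElement (p : ℕ) {G : Type*} [Group G] (x : G) : Prop :=
  ∃ k : ℕ, orderOf x = p ^ k

/-- The `p`-part of a natural number `n`. -/
def pPart (p n : ℕ) : ℕ := p ^ n.factorization p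

lemma isPElement_iff_pow {G : Type*} [Group G] [Finite G] (p : ℕ) [Fact p.Prime] (x : G) :
    IsPElement p x ↔ x ^ pPart p (Nat.card G) = 1 := by
  have hp := (Fact.out : p.Prime)
  have hcard : Nat.card G ≠ 0 := Nat.card_pos.ne'
  rw [← orderOf_dvd_iff_pow_eq_one]
  constructor
  · rintro ⟨k, hk⟩
    rw [hk]
    apply pow_dvd_pow
    rw [← Nat.Prime.pow_dvd_iff_le_factorization hp hcard, ← hk]
    exact orderOf_dvd_natCard x
  · intro h
    obtain ⟨k, -, hk⟩ := (Nat.dvd_prime_pow hp).mp h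
    exact ⟨k, hk⟩

lemma key13 {G : Type*} [Group G] [Finite G] (p : ℕ) [Fact p.Prime]
    (t : ℕ) (N : Fin t → Subgroup G)
    (hcomm : ∀ i j, i ≠ j → ∀ x ∈ N i, ∀ y ∈ N j, Commute x y)
    (hind : iSupIndep N)
    (g : G) (hgp : IsPElement p g) (hg : ∀ i, g ∈ Subgroup.normalizer (N i : Set G)) :
    Nat.card {x : G | (∃ n ∈ ⨆ i, N i, x = n * g) ∧ IsPElement p x} =
      ∏ i : Fin t, Nat.card {x : G | (∃ n ∈ N i, x = n * g) ∧ IsPElement p x} := by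
  classical
  have hcomm' : Pairwise fun i j : Fin t => ∀ x y : G, x ∈ N i → y ∈ N j → Commute x y :=
    fun i j h x y hx hy => hcomm i j h x hx y hy
  set φ : (∀ i, N i) →* G := Subgroup.noncommPiCoprod hcomm' with hφ
  have hφinj : Function.Injective φ :=
    Subgroup.injective_noncommPiCoprod_of_iSupIndep hind
  have hrange : φ.range = ⨆ i, N i := Subgroup.noncommPiCoprod_range
  set q : ℕ := pPart p (Nat.card G) with hq
  have hgq : g ^ q = 1 := (isPElement_iff_pow p g).mp hgp
  have hgq' : g⁻¹ ^ q = 1 := by rw [inv_pow, hgq, inv_one]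
  -- membership lemma
  have mem_aux : ∀ (m : ℕ) (i : Fin t), ∀ x ∈ N i, (x * g) ^ m * g⁻¹ ^ m ∈ N i := by
    intro m
    induction m with
    | zero => intro i x hx; simpa using (N i).one_mem
    | succ m ih =>
        intro i x hx
        have h1 : (x * g) ^ (m + 1) * g⁻¹ ^ (m + 1)
            = x * (g * ((x * g) ^ m * g⁻¹ ^ m) * g⁻¹) := by
          rw [pow_succ' (x * g), pow_succ g⁻¹]
          group
        rw [h1]
        exact (N i).mul_mem hx ((Subgroup.mem_normalizer_iff.mp (hg i) _).mp (ih i x hx))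
  -- conjugation lemma
  have hconj : ∀ c : ∀ i, N i,
      g * φ c * g⁻¹ = φ (fun i => ⟨g * (c i : G) * g⁻¹,
        (Subgroup.mem_normalizer_iff.mp (hg i) _).mp (c i).2⟩) := by
    intro c
    rw [Subgroup.noncommPiCoprod_apply, Subgroup.noncommPiCoprod_apply]
    have : g * (Finset.univ.noncommProd (fun i => ((c i : G)))
        (fun i _ j _ h => hcomm' h _ _ (c i).2 (c j).2)) * g⁻¹
        = (MulAut.conj g) (Finset.univ.noncommProd (fun i => ((c i : G)))
        (fun i _ j _ h => hcomm' h _ _ (c i).2 (c j).2)) := rfl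
    rw [this]
    refine (Finset.map_noncommProd _ _ _ (MulAut.conj g)).trans ?_
    exact Finset.noncommProd_congr rfl (fun x _ => rfl) _
  -- the vector of partial products
  set d : ℕ → (∀ i, N i) → (∀ i, N i) := fun m c i =>
    ⟨((c i : G) * g) ^ m * g⁻¹ ^ m, mem_aux m i _ (c i).2⟩ with hd
  have main : ∀ (m : ℕ) (c : ∀ i, N i), (φ c * g) ^ m * g⁻¹ ^ m = φ (d m c) := by
    intro m
    induction m with
    | zero =>
        intro c
        have : d 0 c = 1 := funext fun i => Subtype.ext (by simp [hd])
        rw [this, map_one]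
        simp
    | succ m ih =>
        intro c
        have h1 : (φ c * g) ^ (m + 1) * g⁻¹ ^ (m + 1)
            = φ c * (g * ((φ c * g) ^ m * g⁻¹ ^ m) * g⁻¹) := by
          rw [pow_succ' (φ c * g), pow_succ g⁻¹]
          group
        rw [h1, ih, hconj, ← map_mul]
        congr 1
        funext i
        apply Subtype.ext
        show (c i : G) * (g * (((c i : G) * g) ^ m * g⁻¹ ^ m) * g⁻¹)
            = ((c i : G) * g) ^ (m + 1) * g⁻¹ ^ (m + 1)
        rw [pow_succ' ((c i : G) * g), pow_succ g⁻¹]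
        group
  -- p-element criterion
  have pe_key : ∀ c : ∀ i, N i,
      (IsPElement p (φ c * g) ↔ ∀ i, IsPElement p ((c i : G) * g)) := by
    intro c
    rw [isPElement_iff_pow]
    have h1 : (φ c * g) ^ q = φ (d q c) := by
      rw [← main q c, hgq', mul_one]
    rw [h1]
    constructor
    · intro h i
      rw [isPElement_iff_pow]
      have : d q c = 1 := hφinj (by rw [h, map_one])
      have := congrFun this i
      have := congrArg (Subtype.val) this
      simp only [hd] at this
      rw [hgq', mul_one] at this
      exact this
    · intro h
      have : d q c = 1 := by
        funext i
        apply Subtype.ext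
        simp only [hd]
        rw [hgq', mul_one]
        exact (isPElement_iff_pow p _).mp (h i)
      rw [this, map_one]
  -- the bijection
  have hmem : ∀ (b : ∀ i, {x : G | (∃ n ∈ N i, x = n * g) ∧ IsPElement p x}) (i : Fin t),
      (b i : G) * g⁻¹ ∈ N i := by
    intro b i
    obtain ⟨⟨n, hn, he⟩, -⟩ := (b i).2
    rw [he, mul_inv_cancel_right]
    exact hn
  set c' : (∀ i, {x : G | (∃ n ∈ N i, x = n * g) ∧ IsPElement p x}) → (∀ i, N i) :=
    fun b i => ⟨(b i : G) * g⁻¹, hmem b i⟩ with hc'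
  have hA : ∀ b, (φ (c' b) * g) ∈ {x : G | (∃ n ∈ ⨆ i, N i, x = n * g) ∧ IsPElement p x} := by
    intro b
    constructor
    · exact ⟨φ (c' b), hrange ▸ MonoidHom.mem_range.mpr ⟨c' b, rfl⟩, rfl⟩
    · rw [pe_key]
      intro i
      have : (c' b i : G) * g = (b i : G) := by
        simp [hc', inv_mul_cancel_right]
      rw [this]
      exact (b i).2.2
  set Ψ : (∀ i, {x : G | (∃ n ∈ N i, x = n * g) ∧ IsPElement p x}) →
      {x : G | (∃ n ∈ ⨆ i, N i, x = n * g) ∧ IsPElement p x} :=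
    fun b => ⟨φ (c' b) * g, hA b⟩ with hΨ
  have hbij : Function.Bijective Ψ := by
    constructor
    · intro b b' h
      have h1 : φ (c' b) = φ (c' b') := by
        have := congrArg Subtype.val h
        simp only [hΨ] at this
        exact mul_right_cancel this
      have h2 := hφinj h1
      funext i
      have := congrArg (Subtype.val) (congrFun h2 i)
      simp only [hc'] at this
      exact Subtype.ext (mul_right_cancel this)
    · rintro ⟨x, ⟨n, hn, rfl⟩, hpe⟩
      rw [← hrange] at hn
      obtain ⟨c, rfl⟩ := hn
      have hpei := (pe_key c).mp hpe
      refine ⟨fun i => ⟨(c i : G) * g, ⟨c i, (c i).2, rfl⟩, hpei i⟩, ?_⟩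
      apply Subtype.ext
      simp only [hΨ]
      congr 1
      congr 1
      funext i
      exact Subtype.ext (by simp [hc', mul_inv_cancel_right])
  rw [← Nat.card_eq_of_bijective Ψ hbij, Nat.card_pi]

theorem stmt13 {G : Type*} [Group G] [Finite G] (p : ℕ) [Fact p.Prime]
    (t : ℕ) (N : Fin t → Subgroup G)
    (hcomm : ∀ i j, i ≠ j → ∀ x ∈ N i, ∀ y ∈ N j, Commute x y)
    (hind : iSupIndep N)
    [(⨆ i, N i).Normal]
    (g : G) (hgp : IsPElement p g) (hg : ∀ i, g ∈ Subgroup.normalizer (N i : Set G)) :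
    Nat.card {x : G | (∃ n ∈ ⨆ i, N i, x = n * g) ∧ IsPElement p x} =
        ∏ i : Fin t, Nat.card {x : G | (∃ n ∈ N i, x = n * g) ∧ IsPElement p x} ∧
      Nat.card {x : G | x ∈ (⨆ i, N i) ∧ IsPElement p x} =
        ∏ i : Fin t, Nat.card {x : G | x ∈ N i ∧ IsPElement p x} := by
  refine ⟨key13 p t N hcomm hind g hgp hg, ?_⟩
  have h1 : IsPElement p (1 : G) := ⟨0, by simp⟩
  have h2 : ∀ i, (1 : G) ∈ Subgroup.normalizer (N i : Set G) := fun i => (Subgroup.normalizer (N i : Set G)).one_mem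
  have hset : ∀ S : Subgroup G, {x : G | (∃ n ∈ S, x = n * 1) ∧ IsPElement p x}
      = {x : G | x ∈ S ∧ IsPElement p x} := by
    intro S
    ext x
    simp [eq_comm]
  have := key13 p t N hcomm hind 1 h1 h2
  rw [hset] at this
  simp_rw [hset] at this
  exact this
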